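/- Let g satisfy Assumption B, L > 0, and let u₀ > 0, q₀ > 0 be constants such that for every q ∈ ℝ: every element of prox_{L⁻¹g}(q) is 0 or of modulus at least u₀, and 0 ∈ prox_{L⁻¹g}(q) if and only if |q| ≤ q₀. If u ∈ G(z), then: if u > 0 then u ≥ max(u₀, (L·q₀ − z)/L); if u < 0 then u ≤ min(−u₀, −(L·q₀ + z)/L); and if u = 0 then |z| ≤ L·q₀. -/
import Mathlib


/-- `u ∈ prox_{s·g}(q)`: `u` is a global minimizer of `v ↦ ½(v − q)² + s·g(v)`,
where `g : ℝ → ℝ ∪ {+∞}` is modeled as an `EReal`-valued function. -/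
def IsProx (g : ℝ → EReal) (s q u : ℝ) : Prop :=
  ∀ v : ℝ, (((u - q) ^ 2 / 2 : ℝ) : EReal) + (s : EReal) * g u ≤
    (((v - q) ^ 2 / 2 : ℝ) : EReal) + (s : EReal) * g v

/-- `u ∈ G(z)` for the set-valued map `G = G_L`: `u` is a global minimizer of
`v ↦ −z·v + (L/2)(v − u)² + g(v)`. -/
def InG (g : ℝ → EReal) (L z u : ℝ) : Prop :=
  ∀ v : ℝ, ((-z * u : ℝ) : EReal) + g u ≤ ((-z * v + L / 2 * (v - u) ^ 2 : ℝ) : EReal) + g v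

/-- Assumption (B3.a): `g` is twice differentiable on some interval `(0, ε)` and
`limsup_{u↘0} g''(u) ∈ (−∞, 0)`. -/
def AssB3a (g : ℝ → EReal) : Prop :=
  ∃ ε : ℝ, 0 < ε ∧ ∃ gr g1 g2 : ℝ → ℝ,
    (∀ u ∈ Set.Ioo (0:ℝ) ε, g u = ((gr u : ℝ) : EReal)) ∧
    (∀ u ∈ Set.Ioo (0:ℝ) ε, HasDerivAt gr (g1 u) u) ∧
    (∀ u ∈ Set.Ioo (0:ℝ) ε, HasDerivAt g1 (g2 u) u) ∧
    Filter.limsup (fun u => ((g2 u : ℝ) : EReal)) (nhdsWithin 0 (Set.Ioi (0:ℝ)))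
      ∈ Set.Ioo (⊥ : EReal) (0 : EReal)

/-- Assumption (B3.b): `g` is twice differentiable on some interval `(0, ε)` and
`lim_{u↘0} g''(u) = −∞`. -/
def AssB3b (g : ℝ → EReal) : Prop :=
  ∃ ε : ℝ, 0 < ε ∧ ∃ gr g1 g2 : ℝ → ℝ,
    (∀ u ∈ Set.Ioo (0:ℝ) ε, g u = ((gr u : ℝ) : EReal)) ∧
    (∀ u ∈ Set.Ioo (0:ℝ) ε, HasDerivAt gr (g1 u) u) ∧
    (∀ u ∈ Set.Ioo (0:ℝ) ε, HasDerivAt g1 (g2 u) u) ∧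
    Filter.Tendsto g2 (nhdsWithin 0 (Set.Ioi (0:ℝ))) Filter.atBot

/-- Assumption (B3.c): `liminf_{u↘0} g(u) > 0`. -/
def AssB3c (g : ℝ → EReal) : Prop :=
  0 < Filter.liminf g (nhdsWithin 0 (Set.Ioi (0:ℝ)))

/-- under Assumption B, if `u₀, q₀ > 0` are such that every element of
`prox_{L⁻¹g}(q)` is `0` or of modulus `≥ u₀`, and `0 ∈ prox_{L⁻¹g}(q) ↔ |q| ≤ q₀`, then for
`u ∈ G(z)`: if `u > 0` then `u ≥ max(u₀, (Lq₀ − z)/L)`; if `u < 0` then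
`u ≤ min(−u₀, −(Lq₀ + z)/L)`; and if `u = 0` then `|z| ≤ Lq₀`. -/
theorem G_properties (g : ℝ → EReal)
    (hlsc : LowerSemicontinuous g)
    (hsymm : ∀ x : ℝ, g (-x) = g x)
    (h0 : g 0 = 0)
    (hproper : ∃ u : ℝ, u ≠ 0 ∧ g u ≠ ⊤)
    (hB3 : AssB3a g ∨ AssB3b g ∨ AssB3c g)
    (hpos : ∀ x : ℝ, 0 ≤ g x)
    (L : ℝ) (hL : 0 < L)
    (u₀ : ℝ) (hu₀ : 0 < u₀) (q₀ : ℝ) (hq₀ : 0 < q₀)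
    (hsparse : ∀ q u : ℝ, IsProx g L⁻¹ q u → u = 0 ∨ u₀ ≤ |u|)
    (hzero : ∀ q : ℝ, IsProx g L⁻¹ q 0 ↔ |q| ≤ q₀)
    (z u : ℝ) (hu : InG g L z u) :
    (0 < u → max u₀ ((L * q₀ - z) / L) ≤ u)
    ∧ (u < 0 → u ≤ min (-u₀) (-((L * q₀ + z) / L)))
    ∧ (u = 0 → |z| ≤ L * q₀) := by
  have hgubot : g u ≠ ⊥ := fun h => by simpa [h] using hpos u
  have hL' : L ≠ 0 := ne_of_gt hL
  have hgutop : g u ≠ ⊤ := by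
    intro htop
    have h := hu 0
    rw [h0, htop, add_zero, EReal.coe_add_top] at h
    exact (EReal.coe_lt_top _).not_ge h
  obtain ⟨a, ha⟩ : ∃ a : ℝ, g u = (a : EReal) :=
    ⟨(g u).toReal, (EReal.coe_toReal hgutop hgubot).symm⟩
  have ha0 : (0:ℝ) ≤ a := by exact_mod_cast ha ▸ hpos u
  set q : ℝ := u + z / L with hq
  clear_value q
  have hLinv : (0:ℝ) < L⁻¹ := inv_pos.mpr hL
  have hzL : z / L * L = z := div_mul_cancel₀ z hL'
  -- real form of the InG inequality for finite values of g
  have hreal : ∀ v b : ℝ, g v = (b : EReal) →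
      -z*u + a ≤ -z*v + L/2*(v-u)^2 + b := by
    intro v b hb
    have h := hu v
    rw [ha, hb] at h
    exact_mod_cast h
  -- u is a prox point at q
  have hprox : IsProx g L⁻¹ q u := by
    intro v
    by_cases hvt : g v = ⊤
    · rw [hvt, EReal.mul_top_of_pos (by exact_mod_cast hLinv),
        EReal.add_top_of_ne_bot (EReal.coe_ne_bot _)]
      exact le_top
    · have hvb : g v ≠ ⊥ := fun h => by simpa [h] using hpos v
      obtain ⟨b, hb⟩ : ∃ b : ℝ, g v = (b : EReal) :=
        ⟨(g v).toReal, (EReal.coe_toReal hvt hvb).symm⟩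
      have h := hreal v b hb
      rw [ha, hb, ← EReal.coe_mul, ← EReal.coe_mul, ← EReal.coe_add, ← EReal.coe_add,
        EReal.coe_le_coe_iff]
      have h3 : L⁻¹ * (a - b) ≤ L⁻¹ * (-z*(v-u) + L/2*(v-u)^2) :=
        mul_le_mul_of_nonneg_left (by linarith) hLinv.le
      have e1 : L⁻¹ * (-z*(v-u) + L/2*(v-u)^2) = (v-u)^2/2 - z*L⁻¹*(v-u) := by
        field_simp; ring
      have e2 : (v - q)^2/2 - (u - q)^2/2 = (v-u)^2/2 - z*L⁻¹*(v-u) := by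
        rw [hq]; field_simp; ring
      nlinarith [h3, e1, e2]
  -- key real inequality A : prox at v = 0
  have hA : (u - q)^2/2 + L⁻¹ * a ≤ q^2/2 := by
    have h := hprox 0
    rw [ha, h0, mul_zero, add_zero, ← EReal.coe_mul, ← EReal.coe_add] at h
    have h' := EReal.coe_le_coe_iff.mp (by exact_mod_cast h)
    linarith [h']
  -- prox of zero at q₀ and -q₀
  have hzq : ∀ q' : ℝ, |q'| ≤ q₀ → q'^2/2 ≤ (u - q')^2/2 + L⁻¹ * a := by
    intro q' hq'
    have h := ((hzero q').mpr hq') u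
    rw [ha, h0, mul_zero, add_zero, ← EReal.coe_mul, ← EReal.coe_add] at h
    have h' := EReal.coe_le_coe_iff.mp (by exact_mod_cast h)
    linarith [h']
  refine ⟨?_, ?_, ?_⟩
  · intro hupos
    have hne : u ≠ 0 := ne_of_gt hupos
    have hu0 : u₀ ≤ u := by
      rcases hsparse q u hprox with h | h
      · exact absurd h hne
      · rwa [abs_of_pos hupos] at h
    have hB := hzq q₀ (by rw [abs_of_pos hq₀])
    have hqge : q₀ ≤ q := by
      by_contra hc
      push_neg at hc
      nlinarith [mul_pos hupos (sub_pos.mpr hc)]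
    rw [max_le_iff]
    refine ⟨hu0, ?_⟩
    rw [div_le_iff₀ hL]
    rw [hq] at hqge
    nlinarith [mul_le_mul_of_nonneg_right hqge hL.le, hzL]
  · intro huneg
    have hne : u ≠ 0 := ne_of_lt huneg
    have hu0 : u ≤ -u₀ := by
      rcases hsparse q u hprox with h | h
      · exact absurd h hne
      · rw [abs_of_neg huneg] at h; linarith
    have hB := hzq (-q₀) (by rw [abs_neg, abs_of_pos hq₀])
    have hqle : q ≤ -q₀ := by
      by_contra hc
      push_neg at hc
      nlinarith [mul_pos (neg_pos.mpr huneg) (by linarith : (0:ℝ) < q + q₀)]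
    rw [le_min_iff]
    refine ⟨hu0, ?_⟩
    rw [le_neg, div_le_iff₀ hL]
    rw [hq] at hqle
    nlinarith [mul_le_mul_of_nonneg_right hqle hL.le, hzL]
  · intro hu0
    have h : |q| ≤ q₀ := (hzero q).mp (by rwa [hu0] at hprox)
    rw [hq, hu0, zero_add, abs_div, abs_of_pos hL, div_le_iff₀ hL] at h
    linarith [h]
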